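/- Let G be a nilpotent group of class 2 (so [G,G] ⊆ Z(G)), and φ, ψ endomorphisms of G with φ([G,G]) ⊆ [G,G] and ψ([G,G]) ⊆ [G,G]. Then for w ∈ G, the equation φ(x) = w·ψ(x) has a solution in G if and only if there exist x₁ ∈ G and c ∈ [G,G] with φ(x₁) = c·w·ψ(x₁) and c ∈ {w⁻¹φ(g)w·ψ(g)⁻¹ | g ∈ G, w⁻¹φ(g)w·ψ(g)⁻¹ ∈ [G,G]}. -/
import Mathlib


/-- The inductive step of the twisted conjugacy decision procedure, for
nilpotent groups of class 2 (commutator subgroup central). -/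
theorem class_two_twisted_conj {G : Type*} [Group G]
    (hG : commutator G ≤ Subgroup.center G) (φ ψ : G →* G)
    (hφ : ∀ x ∈ commutator G, φ x ∈ commutator G)
    (hψ : ∀ x ∈ commutator G, ψ x ∈ commutator G) (w : G) :
    (∃ x : G, φ x = w * ψ x) ↔
      ∃ (x₁ c : G), c ∈ commutator G ∧ φ x₁ = c * w * ψ x₁ ∧
        ∃ g : G, w⁻¹ * φ g * w * (ψ g)⁻¹ ∈ commutator G ∧
          w⁻¹ * φ g * w * (ψ g)⁻¹ = c := by
  constructor
  · rintro ⟨x, hx⟩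
    refine ⟨x, 1, Subgroup.one_mem _, by rw [hx]; group, 1, ?_, ?_⟩
    · simpa using Subgroup.one_mem (commutator G)
    · simp
  · rintro ⟨x₁, c, hc, hx₁, g, hg, hce⟩
    have hcen : ∀ a : G, a * c = c * a := Subgroup.mem_center_iff.mp (hG hc)
    refine ⟨g⁻¹ * x₁, ?_⟩
    have h1 : (φ g)⁻¹ * c * w = w * (ψ g)⁻¹ := by
      calc (φ g)⁻¹ * c * w = (φ g)⁻¹ * w * c := by
            rw [mul_assoc, ← hcen w, ← mul_assoc]
        _ = (φ g)⁻¹ * w * (w⁻¹ * φ g * w * (ψ g)⁻¹) := by rw [hce]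
        _ = w * (ψ g)⁻¹ := by group
    simp only [map_mul, map_inv, hx₁]
    calc (φ g)⁻¹ * (c * w * ψ x₁) = ((φ g)⁻¹ * c * w) * ψ x₁ := by group
      _ = w * ((ψ g)⁻¹ * ψ x₁) := by rw [h1]; group
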